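/- Let C be a category with binary coproducts and the relevant coequalizers. Suppose given a coequalizer diagram consisting of parallel maps l_R, r_R : R¹ → R⁰ with coequalizer π : R⁰ → R, together with morphisms l_Q : Q¹ → Q⁰, r_Q : Q¹ → Q⁰ ⨿ R⁰ and ε : Q⁰ → R⁰. Assume there is a section ξ : Q⁰ → Q¹ of l_Q (i.e. l_Q ∘ ξ = id) such that r_Q ∘ ξ equals ε followed by the coproduct inclusion R⁰ → Q⁰ ⨿ R⁰, and such that ⟨π∘ε, π⟩ ∘ r_Q = π ∘ ε ∘ l_Q, where ⟨π∘ε, π⟩ : Q⁰ ⨿ R⁰ → R is induced by π∘ε and π. Then the fork with parallel maps l_Q ⨿ l_R : Q¹ ⨿ R¹ → Q⁰ ⨿ R⁰ and the map Q¹ ⨿ R¹ → Q⁰ ⨿ R⁰ induced by r_Q and (coproduct inclusion ∘ r_R), together with the projection ⟨π∘ε, π⟩ : Q⁰ ⨿ R⁰ → R, is again a coequalizer diagram. -/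

import Mathlib

open CategoryTheory CategoryTheory.Limits

universe v u

/-- Lemma 3.15: extending a coequalizer by a retractable summand.

Given a coequalizer `π : R⁰ ⟶ R` of the parallel pair `l_R, r_R : R¹ ⟶ R⁰`, maps
`l_Q : Q¹ ⟶ Q⁰`, `r_Q : Q¹ ⟶ Q⁰ ⨿ R⁰`, `ε : Q⁰ ⟶ R⁰`, and a section `ξ` of `l_Q`
satisfying the stated compatibilities, the fork with parallel maps
`l_Q ⨿ l_R : Q¹ ⨿ R¹ ⟶ Q⁰ ⨿ R⁰` and `(r_Q, inr ∘ r_R)`, together with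
`⟨π ∘ ε, π⟩ : Q⁰ ⨿ R⁰ ⟶ R`, is again a coequalizer. -/
theorem stmt0 {C : Type u} [Category.{v} C] [HasBinaryCoproducts C]
    {Q1 Q0 R1 R0 R : C}
    (lR rR : R1 ⟶ R0) (π : R0 ⟶ R) (wR : lR ≫ π = rR ≫ π)
    (hπ : IsColimit (Cofork.ofπ π wR))
    (lQ : Q1 ⟶ Q0) (rQ : Q1 ⟶ Q0 ⨿ R0) (ε : Q0 ⟶ R0)
    (ξ : Q0 ⟶ Q1) (hξ : ξ ≫ lQ = 𝟙 Q0)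
    (hξr : ξ ≫ rQ = ε ≫ coprod.inr)
    (hcomm : rQ ≫ coprod.desc (ε ≫ π) π = lQ ≫ ε ≫ π) :
    Nonempty (IsColimit (Cofork.ofπ (f := coprod.map lQ lR)
      (g := coprod.desc rQ (rR ≫ coprod.inr))
      (coprod.desc (ε ≫ π) π)
      (by
        apply coprod.hom_ext
        · simp only [coprod.map_desc, coprod.desc_comp, coprod.inl_desc]; exact hcomm.symm
        · simp only [coprod.map_desc, coprod.desc_comp, coprod.inr_desc, Category.assoc]; exact wR))) := by
  have hw : ∀ (s : Cofork (coprod.map lQ lR) (coprod.desc rQ (rR ≫ coprod.inr))),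
      lR ≫ coprod.inr ≫ s.π = rR ≫ coprod.inr ≫ s.π := fun s => by
    have := congrArg (fun f => coprod.inr ≫ f) s.condition
    simpa [coprod.inr_desc] using this
  constructor
  refine Cofork.IsColimit.mk _ (fun s => hπ.desc (Cofork.ofπ (coprod.inr ≫ s.π) (hw s)))
    (fun s => ?_) (fun s m hm => ?_)
  · have hd : π ≫ hπ.desc (Cofork.ofπ (coprod.inr ≫ s.π) (hw s)) = coprod.inr ≫ s.π :=
      hπ.fac _ WalkingParallelPair.one
    have hQ : lQ ≫ coprod.inl ≫ s.π = rQ ≫ s.π := by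
      have := congrArg (fun f => coprod.inl ≫ f) s.condition
      simpa [coprod.inl_desc] using this
    apply coprod.hom_ext
    · have h1 : coprod.inl ≫ s.π = ε ≫ coprod.inr ≫ s.π := by
        calc coprod.inl ≫ s.π = ξ ≫ lQ ≫ coprod.inl ≫ s.π := by
              rw [← Category.assoc, hξ, Category.id_comp]
          _ = ξ ≫ rQ ≫ s.π := by rw [hQ]
          _ = ε ≫ coprod.inr ≫ s.π := by rw [← Category.assoc, hξr, Category.assoc]
      simp only [Cofork.π_ofπ, coprod.inl_desc_assoc, Category.assoc, hd, h1]
    · simp only [Cofork.π_ofπ, coprod.inr_desc_assoc, Category.assoc, hd]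
  · have hepi : Epi π := by
      constructor
      intro W a b hab
      exact Cofork.IsColimit.hom_ext hπ (by simpa using hab)
    have h2 := congrArg (fun f => coprod.inr ≫ f) hm
    simp only [Cofork.π_ofπ, coprod.inr_desc_assoc] at h2
    have hd : π ≫ hπ.desc (Cofork.ofπ (coprod.inr ≫ s.π) (hw s)) = coprod.inr ≫ s.π :=
      hπ.fac _ WalkingParallelPair.one
    exact (cancel_epi π).mp (by rw [hd, h2])
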